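/- Let m ≥ 1, n ≥ 1, let C be an n×n real matrix with nonnegative entries, let Ĉ be the (n+1)×(n+1) augmented citation matrix and P̂ = diag(Ĉe)^{-1} Ĉ its row-normalization, and let Â₀ = [[0_{m×m}, 0_{m×n}, e_m],[0_{n×m}, C, e_n],[e_mᵀ, e_nᵀ, 0]] with row-normalization P₀ = diag(Â₀ e)^{-1} Â₀. Suppose y = (y_1, …, y_n, y_d) ∈ ℝ^{n+1} satisfies yᵀ P̂ = yᵀ. Define x ∈ ℝ^{m+n+1} by: each of the m feature components of x equals y_d/n, the item components of x are x_i = y_i for 1 ≤ i ≤ n, and the dummy component is x_{m+n+1} = y_d·(m+n)/n. Then xᵀ P₀ = xᵀ. In particular, in the limit model the items receive (up to a scaling factor) the same rank as in the one-class model, while all features receive a uniform score. -/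

import Mathlib

/-- The augmented citation matrix `Ĉ`: a dummy node `n+1` is added which cites
and is cited by all existing nodes, but not itself. -/
def hatC {n : ℕ} (C : Matrix (Fin n) (Fin n) ℝ) :
    Matrix (Fin (n + 1)) (Fin (n + 1)) ℝ := fun i j =>
  if hi : (i : ℕ) < n then
    if hj : (j : ℕ) < n then C ⟨i, hi⟩ ⟨j, hj⟩ else 1
  else if (j : ℕ) < n then 1 else 0

/-- Row-normalization `P = diag(Ae)⁻¹ A` of a matrix. -/
noncomputable def rowNorm {ι : Type*} [Fintype ι] [DecidableEq ι] (A : Matrix ι ι ℝ) :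
    Matrix ι ι ℝ :=
  Matrix.diagonal (fun i => (∑ j, A i j)⁻¹) * A

/-- The limit matrix `Â₀ = [[0,0,e_m],[0,C,e_n],[e_mᵀ,e_nᵀ,0]]` of the Simple Heap
model as the feature weights tend to zero.  Coordinates are grouped as `m` feature
components, then `n` item components, then one dummy component. -/
def A0 {m n : ℕ} (C : Matrix (Fin n) (Fin n) ℝ) :
    Matrix (Fin m ⊕ Fin n ⊕ Unit) (Fin m ⊕ Fin n ⊕ Unit) ℝ := fun i j =>
  match i, j with
  | Sum.inl _, Sum.inr (Sum.inr _) => 1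
  | Sum.inl _, _ => 0
  | Sum.inr (Sum.inl a), Sum.inr (Sum.inl b) => C a b
  | Sum.inr (Sum.inl _), Sum.inr (Sum.inr _) => 1
  | Sum.inr (Sum.inl _), Sum.inl _ => 0
  | Sum.inr (Sum.inr _), Sum.inr (Sum.inr _) => 0
  | Sum.inr (Sum.inr _), _ => 1

theorem stmt_14 {m n : ℕ} (hm : 1 ≤ m) (hn : 1 ≤ n)
    (C : Matrix (Fin n) (Fin n) ℝ) (hC : ∀ i j, 0 ≤ C i j)
    (y : Fin (n + 1) → ℝ)
    (hy : Matrix.vecMul y (rowNorm (hatC C)) = y) :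
    Matrix.vecMul
        (Sum.elim (fun _ : Fin m => y (Fin.last n) / (n : ℝ))
          (Sum.elim (fun i : Fin n => y i.castSucc)
            (fun _ : Unit => y (Fin.last n) * ((m : ℝ) + (n : ℝ)) / (n : ℝ))))
        (rowNorm (A0 (m := m) C)) =
      Sum.elim (fun _ : Fin m => y (Fin.last n) / (n : ℝ))
        (Sum.elim (fun i : Fin n => y i.castSucc)
          (fun _ : Unit => y (Fin.last n) * ((m : ℝ) + (n : ℝ)) / (n : ℝ))) := by
  have hn0 : (n : ℝ) ≠ 0 := by positivity
  have hmn0 : (m : ℝ) + (n : ℝ) ≠ 0 := by positivity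
  have hrow1 : ∀ a : Fin n, ∑ k, hatC C a.castSucc k = (∑ b, C a b) + 1 := by
    intro a; rw [Fin.sum_univ_castSucc]; simp [hatC]
  have hrow2 : ∑ k, hatC C (Fin.last n) k = n := by
    rw [Fin.sum_univ_castSucc]; simp [hatC]
  have eq1 : ∀ j : Fin n,
      (∑ a, y a.castSucc * (((∑ b, C a b) + 1)⁻¹ * C a j)) + y (Fin.last n) * (n:ℝ)⁻¹
        = y j.castSucc := by
    intro j
    have h := congrFun hy j.castSucc
    rw [Matrix.vecMul, dotProduct] at h
    rw [Fin.sum_univ_castSucc] at h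
    simp only [rowNorm, Matrix.diagonal_mul, hrow1, hrow2] at h
    simpa [hatC] using h
  have eq2 : (∑ a, y a.castSucc * ((∑ b, C a b) + 1)⁻¹) = y (Fin.last n) := by
    have h := congrFun hy (Fin.last n)
    rw [Matrix.vecMul, dotProduct] at h
    rw [Fin.sum_univ_castSucc] at h
    simp only [rowNorm, Matrix.diagonal_mul, hrow1, hrow2] at h
    simpa [hatC] using h
  have hrA1 : ∀ a : Fin m, ∑ j, A0 (m := m) C (Sum.inl a) j = 1 := by
    intro a; simp [A0, Fintype.sum_sum_type]
  have hrA2 : ∀ a : Fin n, ∑ j, A0 (m := m) C (Sum.inr (Sum.inl a)) j = (∑ b, C a b) + 1 := by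
    intro a; simp [A0, Fintype.sum_sum_type]
  have hrA3 : ∀ u : Unit, ∑ j, A0 (m := m) C (Sum.inr (Sum.inr u)) j = (m : ℝ) + n := by
    intro u; simp [A0, Fintype.sum_sum_type]
  funext j
  rcases j with f | b | u
  · rw [Matrix.vecMul, dotProduct, Fintype.sum_sum_type, Fintype.sum_sum_type]
    simp only [rowNorm, Matrix.diagonal_mul, hrA1, hrA2, hrA3]
    simp only [A0, Sum.elim_inl, Sum.elim_inr]
    field_simp
    simp [hn0]
    exact mul_div_cancel₀ _ hn0
  · rw [Matrix.vecMul, dotProduct, Fintype.sum_sum_type, Fintype.sum_sum_type]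
    simp only [rowNorm, Matrix.diagonal_mul, hrA1, hrA2, hrA3]
    simp only [A0, Sum.elim_inl, Sum.elim_inr]
    have h2 : y (Fin.last n) * ((m:ℝ) + n) / n * (((m:ℝ) + n)⁻¹ * 1) = y (Fin.last n) * (n:ℝ)⁻¹ := by
      field_simp
    simp only [inv_one, mul_zero, Finset.sum_const_zero, zero_add,
      Finset.univ_unique, Finset.sum_singleton] at h2 ⊢
    rw [h2, eq1 b]
  · rw [Matrix.vecMul, dotProduct, Fintype.sum_sum_type, Fintype.sum_sum_type]
    simp only [rowNorm, Matrix.diagonal_mul, hrA1, hrA2, hrA3]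
    simp only [A0, Sum.elim_inl, Sum.elim_inr]
    simp only [inv_one, one_mul, mul_one, mul_zero, add_zero, Finset.sum_const,
      Finset.card_univ, Fintype.card_fin, nsmul_eq_mul, Finset.univ_unique,
      Finset.sum_singleton, Finset.sum_const_zero]
    rw [eq2]
    field_simp
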